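/- Let f : ℝ → ℝ be continuously differentiable with f and f' bounded, and suppose f' is Hölder continuous with exponent ς ∈ (0,1] and constant L ≥ 0. Then for every x ∈ ℝ, the limit as ε ↓ 0 of −∫_{−∞}^{∞} f(y)·(∂/∂y) δ_ε(y − x) dy exists and equals f'(x). -/

import Mathlib

open MeasureTheory Real Filter Topology

/-- Gaussian approximation of the delta function:
`δ_ε(u) = (1/(ε√(2π))) · exp(−u²/(2ε²))`. -/
noncomputable def deltaEps (ε u : ℝ) : ℝ :=
  (1 / (ε * Real.sqrt (2 * Real.pi))) * Real.exp (-(u ^ 2) / (2 * ε ^ 2))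

lemma deltaEps_nonneg {ε : ℝ} (hε : 0 < ε) (u : ℝ) : 0 ≤ deltaEps ε u := by
  unfold deltaEps
  positivity

lemma continuous_deltaEps (ε : ℝ) : Continuous (deltaEps ε) := by
  unfold deltaEps
  exact continuous_const.mul (Real.continuous_exp.comp (((continuous_pow 2).neg).div_const _))

lemma deltaEps_eq {ε : ℝ} (u : ℝ) :
    deltaEps ε u = (1 / (ε * Real.sqrt (2 * Real.pi))) * Real.exp (-(2 * ε ^ 2)⁻¹ * u ^ 2) := by
  unfold deltaEps
  rw [show -(u ^ 2) / (2 * ε ^ 2) = -(2 * ε ^ 2)⁻¹ * u ^ 2 by ring]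

lemma integrable_deltaEps {ε : ℝ} (hε : 0 < ε) : Integrable (deltaEps ε) := by
  have hb : (0 : ℝ) < (2 * ε ^ 2)⁻¹ := by positivity
  have := (integrable_exp_neg_mul_sq hb).const_mul (1 / (ε * Real.sqrt (2 * Real.pi)))
  exact this.congr (Filter.Eventually.of_forall fun u => (deltaEps_eq u).symm)

lemma integrable_mul_deltaEps {ε : ℝ} (hε : 0 < ε) :
    Integrable (fun u => u * deltaEps ε u) := by
  have hb : (0 : ℝ) < (2 * ε ^ 2)⁻¹ := by positivity
  have := ((integrable_mul_exp_neg_mul_sq hb).const_mul (1 / (ε * Real.sqrt (2 * Real.pi))))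
  refine this.congr (Filter.Eventually.of_forall fun u => ?_)
  simp only [deltaEps_eq]
  ring

lemma integrable_abs_mul_deltaEps {ε : ℝ} (hε : 0 < ε) :
    Integrable (fun u => |u| * deltaEps ε u) := by
  have := (integrable_mul_deltaEps hε).abs
  refine this.congr (Filter.Eventually.of_forall fun u => ?_)
  simp only [abs_mul, abs_of_nonneg (deltaEps_nonneg hε u)]

lemma integrable_abs_rpow_mul_deltaEps {ε ς : ℝ} (hε : 0 < ε) (hς : 0 < ς) (hς1 : ς ≤ 1) :
    Integrable (fun u => |u| ^ ς * deltaEps ε u) := by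
  have hmeas : AEStronglyMeasurable (fun u => |u| ^ ς * deltaEps ε u) volume := by
    exact ((continuous_abs.rpow_const (fun u => Or.inr hς.le)).mul
      (continuous_deltaEps ε)).aestronglyMeasurable
  refine Integrable.mono' ((integrable_deltaEps hε).add (integrable_abs_mul_deltaEps hε))
    hmeas (Filter.Eventually.of_forall fun u => ?_)
  have h1 : |u| ^ ς ≤ 1 + |u| := by
    rcases le_total (|u|) 1 with h | h
    · have : |u| ^ ς ≤ 1 := Real.rpow_le_one (abs_nonneg u) h hς.le
      linarith [abs_nonneg u]
    · have : |u| ^ ς ≤ |u| ^ (1 : ℝ) := Real.rpow_le_rpow_of_exponent_le h hς1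
      rw [Real.rpow_one] at this
      linarith
  have h2 : 0 ≤ deltaEps ε u := deltaEps_nonneg hε u
  have h3 : 0 ≤ |u| ^ ς := Real.rpow_nonneg (abs_nonneg u) ς
  rw [Real.norm_eq_abs, abs_of_nonneg (mul_nonneg h3 h2)]
  simp only [Pi.add_apply]
  nlinarith [mul_le_mul_of_nonneg_right h1 h2]

lemma integral_deltaEps {ε : ℝ} (hε : 0 < ε) : ∫ u, deltaEps ε u = 1 := by
  have hb : (0 : ℝ) < (2 * ε ^ 2)⁻¹ := by positivity
  have h2π : (0 : ℝ) < 2 * Real.pi := by positivity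
  simp_rw [deltaEps_eq]
  rw [MeasureTheory.integral_const_mul, integral_gaussian]
  have : Real.pi / (2 * ε ^ 2)⁻¹ = ε ^ 2 * (2 * Real.pi) := by
    field_simp
  rw [this, Real.sqrt_mul (sq_nonneg ε), Real.sqrt_sq hε.le]
  field_simp

lemma deltaEps_scale {ε : ℝ} (hε : 0 < ε) (t : ℝ) :
    deltaEps ε (ε * t) = ε⁻¹ * deltaEps 1 t := by
  unfold deltaEps
  rw [show -((ε * t) ^ 2) / (2 * ε ^ 2) = -(t ^ 2) / (2 * 1 ^ 2) by
    rw [div_eq_div_iff (by positivity) (by norm_num)]; ring]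
  rw [one_mul]
  field_simp

lemma integral_abs_rpow_mul_deltaEps {ε ς : ℝ} (hε : 0 < ε) (hς : 0 < ς) :
    ∫ u, |u| ^ ς * deltaEps ε u = ε ^ ς * ∫ t, |t| ^ ς * deltaEps 1 t := by
  have h := MeasureTheory.Measure.integral_comp_mul_left
    (fun u => |u| ^ ς * deltaEps ε u) ε
  have hpt : ∀ t : ℝ, |ε * t| ^ ς * deltaEps ε (ε * t)
      = (ε ^ ς * ε⁻¹) * (|t| ^ ς * deltaEps 1 t) := by
    intro t
    rw [abs_mul, Real.mul_rpow (abs_nonneg ε) (abs_nonneg t), abs_of_pos hε,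
      deltaEps_scale hε]
    ring
  rw [funext hpt] at h
  rw [MeasureTheory.integral_const_mul] at h
  have hεne : ε ≠ 0 := hε.ne'
  rw [abs_of_pos (inv_pos.mpr hε), smul_eq_mul] at h
  rw [eq_comm, inv_mul_eq_iff_eq_mul₀ hεne] at h
  rw [h]
  field_simp

lemma hasDerivAt_deltaEps {ε : ℝ} (hε : 0 < ε) (x y : ℝ) :
    HasDerivAt (fun y' : ℝ => deltaEps ε (y' - x))
      (-((y - x) / ε ^ 2) * deltaEps ε (y - x)) y := by
  have h1 : HasDerivAt (fun y' : ℝ => y' - x) 1 y := (hasDerivAt_id y).sub_const x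
  have h2 : HasDerivAt (fun y' : ℝ => (y' - x) ^ 2) (2 * (y - x)) y := by
    simpa using h1.fun_pow 2
  have h3 : HasDerivAt (fun y' : ℝ => -((y' - x) ^ 2) / (2 * ε ^ 2))
      (-(2 * (y - x)) / (2 * ε ^ 2)) y := (h2.neg).div_const _
  have h4 := (h3.exp).const_mul (1 / (ε * Real.sqrt (2 * Real.pi)))
  have : (1 / (ε * Real.sqrt (2 * Real.pi))) *
      (Real.exp (-((y - x) ^ 2) / (2 * ε ^ 2)) * (-(2 * (y - x)) / (2 * ε ^ 2)))
      = -((y - x) / ε ^ 2) * deltaEps ε (y - x) := by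
    unfold deltaEps
    have hεne : (ε : ℝ) ^ 2 ≠ 0 := by positivity
    field_simp
  rw [this] at h4
  exact h4

/-- For `f` continuously differentiable with `f`, `f'` bounded and `f'`
Hölder continuous (exponent `ς ∈ (0,1]`, constant `L ≥ 0`), the limit as `ε ↓ 0` of
`−∫ f(y) ∂_y δ_ε(y − x) dy` exists and equals `f'(x)`. -/
theorem gaussian_mollification_deriv_tendsto
    (f : ℝ → ℝ) (ς L : ℝ) (hς : ς ∈ Set.Ioc (0 : ℝ) 1) (hL : 0 ≤ L)
    (hf : ContDiff ℝ 1 f)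
    (hbdd : ∃ M : ℝ, ∀ x : ℝ, |f x| ≤ M)
    (hbdd' : ∃ M : ℝ, ∀ x : ℝ, |deriv f x| ≤ M)
    (hholder : ∀ y₁ y₂ : ℝ, |deriv f y₁ - deriv f y₂| ≤ L * |y₁ - y₂| ^ ς) :
    ∀ x : ℝ,
      Tendsto
        (fun ε : ℝ => -(∫ y : ℝ, f y * deriv (fun y' : ℝ => deltaEps ε (y' - x)) y))
        (𝓝[>] 0) (𝓝 (deriv f x)) := by
  obtain ⟨hς0, hς1⟩ := hς
  obtain ⟨M, hM⟩ := hbdd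
  obtain ⟨M', hM'⟩ := hbdd'
  intro x
  set C₁ : ℝ := ∫ t, |t| ^ ς * deltaEps 1 t with hC₁
  have hfd : ∀ y : ℝ, HasDerivAt f (deriv f y) y := fun y =>
    ((hf.differentiable one_ne_zero).differentiableAt (x := y)).hasDerivAt
  have hfc : Continuous f := hf.continuous
  have hf'c : Continuous (deriv f) := (hf.continuous_deriv le_rfl)
  -- the function g : ε ↦ ∫ f'(y) δ_ε(y - x) dy
  set g : ℝ → ℝ := fun ε => ∫ y, deriv f y * deltaEps ε (y - x) with hg
  -- Step 1: for ε > 0 the expression equals g ε (integration by parts)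
  have step1 : ∀ ε : ℝ, 0 < ε →
      -(∫ y : ℝ, f y * deriv (fun y' : ℝ => deltaEps ε (y' - x)) y) = g ε := by
    intro ε hε
    have hcd : Continuous (fun y : ℝ => deltaEps ε (y - x)) :=
      (continuous_deltaEps ε).comp (continuous_id.sub continuous_const)
    have Int1 : Integrable (fun y : ℝ => deltaEps ε (y - x)) :=
      (integrable_deltaEps hε).comp_sub_right x
    have Int2 : Integrable (fun y : ℝ => |y - x| * deltaEps ε (y - x)) :=
      (integrable_abs_mul_deltaEps hε).comp_sub_right x
    set v' : ℝ → ℝ := fun y => -((y - x) / ε ^ 2) * deltaEps ε (y - x) with hv'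
    have hderiv : ∀ y : ℝ, deriv (fun y' : ℝ => deltaEps ε (y' - x)) y = v' y := fun y =>
      (hasDerivAt_deltaEps hε x y).deriv
    have huv' : Integrable (f * v') := by
      have hmeas : AEStronglyMeasurable (f * v') volume := by
        apply Continuous.aestronglyMeasurable
        exact hfc.mul ((((continuous_id.sub continuous_const).div_const _).neg).mul hcd)
      refine Integrable.mono' (Int2.const_mul (M * (ε ^ 2)⁻¹)) hmeas
        (Filter.Eventually.of_forall fun y => ?_)
      have h0 : 0 ≤ deltaEps ε (y - x) := deltaEps_nonneg hε _
      have hMy : |f y| ≤ M := hM y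
      have key : ‖(f * v') y‖
          = |f y| * (|y - x| / ε ^ 2 * deltaEps ε (y - x)) := by
        simp only [Pi.mul_apply, hv', Real.norm_eq_abs, abs_mul, abs_neg, abs_div,
          abs_of_nonneg h0, abs_of_nonneg (sq_nonneg ε)]
      rw [key]
      calc |f y| * (|y - x| / ε ^ 2 * deltaEps ε (y - x))
          ≤ M * (|y - x| / ε ^ 2 * deltaEps ε (y - x)) := by
            apply mul_le_mul_of_nonneg_right hMy; positivity
        _ = M * (ε ^ 2)⁻¹ * (|y - x| * deltaEps ε (y - x)) := by ring
    have hu'v : Integrable (deriv f * fun y : ℝ => deltaEps ε (y - x)) := by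
      have hmeas : AEStronglyMeasurable (deriv f * fun y : ℝ => deltaEps ε (y - x)) volume :=
        (hf'c.mul hcd).aestronglyMeasurable
      refine Integrable.mono' (Int1.const_mul M') hmeas
        (Filter.Eventually.of_forall fun y => ?_)
      have h0 : 0 ≤ deltaEps ε (y - x) := deltaEps_nonneg hε _
      simp only [Pi.mul_apply, Real.norm_eq_abs, abs_mul, abs_of_nonneg h0]
      exact mul_le_mul_of_nonneg_right (hM' y) h0
    have huv : Integrable (f * fun y : ℝ => deltaEps ε (y - x)) := by
      have hmeas : AEStronglyMeasurable (f * fun y : ℝ => deltaEps ε (y - x)) volume :=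
        (hfc.mul hcd).aestronglyMeasurable
      refine Integrable.mono' (Int1.const_mul M) hmeas
        (Filter.Eventually.of_forall fun y => ?_)
      have h0 : 0 ≤ deltaEps ε (y - x) := deltaEps_nonneg hε _
      simp only [Pi.mul_apply, Real.norm_eq_abs, abs_mul, abs_of_nonneg h0]
      exact mul_le_mul_of_nonneg_right (hM y) h0
    have ibp := MeasureTheory.integral_mul_deriv_eq_deriv_mul_of_integrable
      (u := f) (v := fun y : ℝ => deltaEps ε (y - x)) (u' := deriv f) (v' := v')
      (fun y _ => hfd y) (fun y _ => hasDerivAt_deltaEps hε x y) huv' hu'v huv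
    have : (fun y : ℝ => f y * deriv (fun y' : ℝ => deltaEps ε (y' - x)) y)
        = fun y => f y * v' y := funext fun y => by rw [hderiv y]
    rw [this]
    have : (∫ y : ℝ, f y * v' y) = - ∫ y : ℝ, deriv f y * deltaEps ε (y - x) := ibp
    rw [this, neg_neg]
  -- Step 2: quantitative bound for g ε
  have step2 : ∀ ε : ℝ, 0 < ε → ‖g ε - deriv f x‖ ≤ (L * C₁) * ε ^ ς := by
    intro ε hε
    have hcd : Continuous (fun y : ℝ => deltaEps ε (y - x)) :=
      (continuous_deltaEps ε).comp (continuous_id.sub continuous_const)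
    have Int1 : Integrable (fun y : ℝ => deltaEps ε (y - x)) :=
      (integrable_deltaEps hε).comp_sub_right x
    have Int3 : Integrable (fun y : ℝ => |y - x| ^ ς * deltaEps ε (y - x)) :=
      (integrable_abs_rpow_mul_deltaEps hε hς0 hς1).comp_sub_right x
    have hu'v : Integrable (fun y : ℝ => deriv f y * deltaEps ε (y - x)) := by
      have hmeas : AEStronglyMeasurable (fun y : ℝ => deriv f y * deltaEps ε (y - x)) volume :=
        (hf'c.mul hcd).aestronglyMeasurable
      refine Integrable.mono' (Int1.const_mul M') hmeas
        (Filter.Eventually.of_forall fun y => ?_)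
      have h0 : 0 ≤ deltaEps ε (y - x) := deltaEps_nonneg hε _
      simp only [Real.norm_eq_abs, abs_mul, abs_of_nonneg h0]
      exact mul_le_mul_of_nonneg_right (hM' y) h0
    have hint_delta : (∫ y : ℝ, deltaEps ε (y - x)) = 1 :=
      (MeasureTheory.integral_sub_right_eq_self (deltaEps ε) x).trans (integral_deltaEps hε)
    have hsub : g ε - deriv f x = ∫ y : ℝ, (deriv f y - deriv f x) * deltaEps ε (y - x) := by
      have h1 : (∫ y : ℝ, (deriv f y - deriv f x) * deltaEps ε (y - x))
          = (∫ y : ℝ, deriv f y * deltaEps ε (y - x))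
            - ∫ y : ℝ, deriv f x * deltaEps ε (y - x) := by
        simp_rw [sub_mul]
        exact MeasureTheory.integral_sub hu'v (Int1.const_mul (deriv f x))
      rw [h1, MeasureTheory.integral_const_mul, hint_delta, mul_one]
    rw [hsub]
    have hptw : ∀ y : ℝ, ‖(deriv f y - deriv f x) * deltaEps ε (y - x)‖
        ≤ L * (|y - x| ^ ς * deltaEps ε (y - x)) := by
      intro y
      have h0 : 0 ≤ deltaEps ε (y - x) := deltaEps_nonneg hε _
      rw [Real.norm_eq_abs, abs_mul, abs_of_nonneg h0, ← mul_assoc]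
      exact mul_le_mul_of_nonneg_right (hholder y x) h0
    have hbound := MeasureTheory.norm_integral_le_of_norm_le (Int3.const_mul L)
      (Filter.Eventually.of_forall hptw)
    refine hbound.trans ?_
    have hshift : (∫ y : ℝ, |y - x| ^ ς * deltaEps ε (y - x))
        = ∫ u : ℝ, |u| ^ ς * deltaEps ε u :=
      MeasureTheory.integral_sub_right_eq_self (fun u => |u| ^ ς * deltaEps ε u) x
    rw [MeasureTheory.integral_const_mul, hshift, integral_abs_rpow_mul_deltaEps hε hς0]
    exact le_of_eq (by ring)
  -- Step 3: conclude by squeezing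
  have htend0 : Tendsto (fun ε : ℝ => (L * C₁) * ε ^ ς) (𝓝[>] 0) (𝓝 0) := by
    have h1 : Tendsto (fun ε : ℝ => ε ^ ς) (𝓝[>] 0) (𝓝 0) := by
      have := (Real.continuousAt_rpow_const 0 ς (Or.inr hς0.le)).tendsto
      rw [Real.zero_rpow hς0.ne'] at this
      exact this.mono_left nhdsWithin_le_nhds
    have := h1.const_mul (L * C₁)
    rwa [mul_zero] at this
  have hgt : Tendsto (fun ε : ℝ => g ε - deriv f x) (𝓝[>] 0) (𝓝 0) := by
    apply squeeze_zero_norm' ?_ htend0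
    filter_upwards [self_mem_nhdsWithin] with ε hε
    exact step2 ε hε
  have hgtend : Tendsto g (𝓝[>] 0) (𝓝 (deriv f x)) := by
    have := hgt.add_const (deriv f x)
    simpa using this
  refine hgtend.congr' ?_
  filter_upwards [self_mem_nhdsWithin] with ε hε
  exact (step1 ε hε).symm
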